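/- Let η = 1, β > 0, λ > 0, T > 0, and define y(t) = β·(1 − 2/(λ(T−t) + 4)) for t ∈ [0, T]. With f(x) = 1/β and F(x) = x/β on [0, β] (uniform distribution), y satisfies the equation y(t) = (1 − F(y(t)))/f(y(t)) + λ·∫_t^T ((1 − F(y(s)))²)/f(y(s)) ds for all t ∈ [0, T]. -/

import Mathlib

theorem unif_cutoff_solves_fixed_point (lam T β : ℝ)
    (hlam : 0 < lam) (hT : 0 < T) (hβ : 0 < β)
    (f F y : ℝ → ℝ)
    (hf : ∀ x : ℝ, f x = 1 / β)
    (hF : ∀ x : ℝ, F x = x / β)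
    (hy : ∀ t : ℝ, y t = β * (1 - 2 / (lam * (T - t) + 4))) :
    ∀ t ∈ Set.Icc (0:ℝ) T,
      y t = (1 - F (y t)) / f (y t) +
        lam * ∫ s in t..T, (1 - F (y s)) ^ 2 / f (y s) := by
  intro t ht
  obtain ⟨ht0, hle⟩ := ht
  set u : ℝ → ℝ := fun s => lam * (T - s) + 4 with hu
  have hucont : Continuous u := by
    simp only [hu]; continuity
  have hupos : ∀ s ∈ Set.uIcc t T, 0 < u s := by
    intro s hs
    rw [Set.uIcc_of_le hle] at hs
    have : 0 ≤ lam * (T - s) := mul_nonneg hlam.le (by linarith [hs.2])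
    simp only [hu]; linarith
  have heq : ∀ s : ℝ, (1 - F (y s)) ^ 2 / f (y s) = 4 * β / (u s) ^ 2 := by
    intro s
    rw [hF, hf, hy]
    rw [mul_div_cancel_left₀ _ hβ.ne']
    rw [one_div, div_eq_mul_inv, inv_inv, show (1 - (1 - 2 / (lam * (T - s) + 4))) = 2 / u s from by ring,
      div_pow]
    ring
  have hderiv : ∀ s ∈ Set.uIcc t T,
      HasDerivAt (fun s => 4 * β / lam * (u s)⁻¹) (4 * β / (u s) ^ 2) s := by
    intro s hs
    have h1 : HasDerivAt u (-lam) s := by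
      have := (((hasDerivAt_const s T).sub (hasDerivAt_id s)).const_mul lam).add_const 4
      simpa [hu] using this
    have h2 := (h1.inv (hupos s hs).ne').const_mul (4 * β / lam)
    have hl : lam ≠ 0 := hlam.ne'
    have h3 : 4 * β / u s ^ 2 = 4 * β / lam * (- -lam / u s ^ 2) := by
      rw [neg_neg, div_mul_div_comm, mul_comm (4 * β) lam, mul_div_mul_left _ _ hl]
    rw [h3]
    exact h2
  have hint : IntervalIntegrable (fun s => 4 * β / (u s) ^ 2) MeasureTheory.volume t T := by
    apply ContinuousOn.intervalIntegrable
    apply ContinuousOn.div continuousOn_const ((hucont.pow 2).continuousOn)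
    intro s hs
    exact pow_ne_zero 2 (hupos s hs).ne'
  have hutpos : 0 < u t := hupos t (Set.left_mem_uIcc)
  have hInt : (∫ s in t..T, (1 - F (y s)) ^ 2 / f (y s)) =
      4 * β / lam * (u T)⁻¹ - 4 * β / lam * (u t)⁻¹ := by
    rw [intervalIntegral.integral_congr (fun s _ => heq s)]
    exact intervalIntegral.integral_eq_sub_of_hasDerivAt hderiv hint
  rw [hInt, hF, hf, hy]
  have huT : u T = 4 := by simp [hu]
  have hut : u t = lam * (T - t) + 4 := rfl
  rw [huT, ← hut]
  rw [mul_div_cancel_left₀ _ hβ.ne']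
  have h2 : u t ≠ 0 := hutpos.ne'
  field_simp
  ring
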